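/- Let P be the set of partitions into odd coloured parts which are finite non-increasing subsequences of the chain ... ≥ 3_{c_1} ≥ 2_{c_0} ≥ 1_{c_{\bar 1}} ≥ ... ≥ 1_{c_{\bar n}} ≥ 1_{c_n} ≥ ... ≥ 1_{c_1} ≥ 0_{c_0}, always ending in 0_{c_0}, where parts 2k_{c_0} (k>0) may repeat and all other parts appear at most once, with odd parts having colours among c_1,c_{\bar 1},...,c_n,c_{\bar n} and even parts colour c_0. With c_0 = 1, the generating function ∑_{π∈P} C(π) q^{|π|} equals ∏_{k=1}^n ∏_{j≥0}(1 + c_k q^{2j+1})(1 + c_k^{-1} q^{2j+1}) / ∏_{j≥1}(1 - q^{2j}), where C(π) is the product of the colours of the parts of π (with c_{\bar k} = c_k^{-1}) and |π| the sum of the parts. -/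

import Mathlib

open PowerSeries Finset

namespace Stmt11Aux

variable {R : Type*} [CommRing R]

/-- coefficient agreement up to degree `a` -/
def MEq (a : ℕ) (f g : PowerSeries R) : Prop := ∀ i ≤ a, coeff i f = coeff i g

lemma MEq.refl {a : ℕ} (f : PowerSeries R) : MEq a f f := fun _ _ => rfl

lemma MEq.mul {a : ℕ} {f g f' g' : PowerSeries R} (h : MEq a f g) (h' : MEq a f' g') :
    MEq a (f * f') (g * g') := by
  intro i hi
  rw [coeff_mul, coeff_mul]
  refine Finset.sum_congr rfl fun p hp => ?_
  rw [Finset.HasAntidiagonal.mem_antidiagonal] at hp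
  rw [h p.1 (by omega), h' p.2 (by omega)]

lemma MEq.add {a : ℕ} {f g f' g' : PowerSeries R} (h : MEq a f g) (h' : MEq a f' g') :
    MEq a (f + f') (g + g') := by
  intro i hi
  rw [map_add, map_add, h i hi, h' i hi]

lemma MEq.prod {a : ℕ} {ι : Type*} (s : Finset ι) (f g : ι → PowerSeries R)
    (h : ∀ i ∈ s, MEq a (f i) (g i)) : MEq a (∏ i ∈ s, f i) (∏ i ∈ s, g i) := by
  classical
  induction s using Finset.induction with
  | empty => exact MEq.refl _
  | @insert x s hx ih =>
    rw [Finset.prod_insert hx, Finset.prod_insert hx]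
    exact (h _ (Finset.mem_insert_self _ _)).mul
      (ih fun i hi => h i (Finset.mem_insert_of_mem hi))

lemma MEq.sum {a : ℕ} {ι : Type*} (s : Finset ι) (f g : ι → PowerSeries R)
    (h : ∀ i ∈ s, MEq a (f i) (g i)) : MEq a (∑ i ∈ s, f i) (∑ i ∈ s, g i) := by
  classical
  induction s using Finset.induction with
  | empty => exact MEq.refl _
  | @insert x s hx ih =>
    rw [Finset.sum_insert hx, Finset.sum_insert hx]
    exact (h _ (Finset.mem_insert_self _ _)).add
      (ih fun i hi => h i (Finset.mem_insert_of_mem hi))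

lemma MEq_prod_one {a : ℕ} {ι : Type*} (s : Finset ι) (f : ι → PowerSeries R)
    (h : ∀ i ∈ s, MEq a (f i) 1) : MEq a (∏ i ∈ s, f i) 1 := by
  have := MEq.prod s f (fun _ => 1) h
  rwa [Finset.prod_const_one] at this

lemma MEq_sum_zero {a : ℕ} {ι : Type*} (s : Finset ι) (f : ι → PowerSeries R)
    (h : ∀ i ∈ s, MEq a (f i) 0) : MEq a (∑ i ∈ s, f i) 0 := by
  have := MEq.sum s f (fun _ => 0) h
  rwa [Finset.sum_const, smul_zero] at this

lemma MEq_X_pow {a m : ℕ} (hm : a < m) : MEq a ((X : PowerSeries R) ^ m) 0 := by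
  intro i hi
  rw [coeff_X_pow, map_zero, if_neg (by omega)]

lemma MEq_one_add {a m : ℕ} (r : R) (hm : a < m) :
    MEq a (1 + C r * X ^ m) 1 := by
  intro i hi
  rw [map_add, coeff_C_mul, coeff_X_pow, if_neg (by omega), mul_zero, add_zero]

lemma MEq_one_sub {a m : ℕ} (hm : a < m) :
    MEq a (1 - (X : PowerSeries R) ^ m) 1 := by
  intro i hi
  rw [map_sub, coeff_X_pow, if_neg (by omega), sub_zero]

/-- the odd double product, truncated at level `M`. -/
noncomputable def Aser (n : ℕ) (c : Fin n → Rˣ) (M : ℕ) : PowerSeries R :=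
  ∏ k : Fin n, ∏ j ∈ Finset.range (M + 1),
    ((1 + PowerSeries.C ((c k : Rˣ) : R) * PowerSeries.X ^ (2 * j + 1)) *
      (1 + PowerSeries.C (((c k)⁻¹ : Rˣ) : R) * PowerSeries.X ^ (2 * j + 1)))

/-- the truncated geometric-series product for the even parts. -/
noncomputable def Dser (M : ℕ) : PowerSeries R :=
  ∏ j ∈ Finset.range (M + 1), ∑ i : Fin (M + 1), (X : PowerSeries R) ^ ((i : ℕ) * (2 * j + 2))

/-- the truncated Euler product. -/
noncomputable def Eser (M : ℕ) : PowerSeries R :=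
  ∏ j ∈ Finset.range (M + 1), (1 - (X : PowerSeries R) ^ (2 * (j + 1)))

lemma Aser_stab (n : ℕ) (c : Fin n → Rˣ) {a M : ℕ} (h : a ≤ M) :
    MEq a (Aser n c M : PowerSeries R) (Aser n c a) := by
  refine MEq.prod _ _ _ fun k _ => ?_
  rw [show Finset.range (M + 1) = Finset.range ((a + 1) + (M - a)) from by congr 1; omega,
    Finset.prod_range_add]
  have h1 : MEq a (∏ x ∈ Finset.range (M - a),
      ((1 + PowerSeries.C ((c k : Rˣ) : R) * PowerSeries.X ^ (2 * ((a+1) + x) + 1)) *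
        (1 + PowerSeries.C (((c k)⁻¹ : Rˣ) : R) * PowerSeries.X ^ (2 * ((a+1) + x) + 1))))
      (1 : PowerSeries R) := by
    refine MEq_prod_one _ _ fun x _ => ?_
    have := (MEq_one_add (a := a) ((c k : Rˣ) : R) (m := 2 * ((a+1) + x) + 1) (by omega)).mul
      (MEq_one_add (a := a) (((c k)⁻¹ : Rˣ) : R) (m := 2 * ((a+1) + x) + 1) (by omega))
    rwa [one_mul] at this
  have := (MEq.refl (a := a) (∏ j ∈ Finset.range (a + 1),
      ((1 + PowerSeries.C ((c k : Rˣ) : R) * PowerSeries.X ^ (2 * j + 1)) *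
        (1 + PowerSeries.C (((c k)⁻¹ : Rˣ) : R) * PowerSeries.X ^ (2 * j + 1))))).mul h1
  rwa [mul_one] at this

lemma Ssum_stab {a M : ℕ} (j : ℕ) (h : a ≤ M) :
    MEq a (∑ i : Fin (M + 1), (X : PowerSeries R) ^ ((i : ℕ) * (2 * j + 2)))
      (∑ i : Fin (a + 1), (X : PowerSeries R) ^ ((i : ℕ) * (2 * j + 2))) := by
  rw [Fin.sum_univ_eq_sum_range (fun i => (X : PowerSeries R) ^ (i * (2 * j + 2))),
    Fin.sum_univ_eq_sum_range (fun i => (X : PowerSeries R) ^ (i * (2 * j + 2))),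
    show M + 1 = (a + 1) + (M - a) by omega, Finset.sum_range_add]
  have h1 : MEq a (∑ x ∈ Finset.range (M - a),
      (X : PowerSeries R) ^ (((a + 1) + x) * (2 * j + 2))) 0 := by
    refine MEq_sum_zero _ _ fun x _ => MEq_X_pow ?_
    have : (a + 1) * 2 ≤ ((a + 1) + x) * (2 * j + 2) :=
      Nat.mul_le_mul (by omega) (by omega)
    omega
  have := (MEq.refl (a := a)
      (∑ i ∈ Finset.range (a + 1), (X : PowerSeries R) ^ (i * (2 * j + 2)))).add h1
  rwa [add_zero] at this

lemma Ssum_one {a M : ℕ} (j : ℕ) (hj : a < 2 * j + 2) :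
    MEq a (∑ i : Fin (M + 1), (X : PowerSeries R) ^ ((i : ℕ) * (2 * j + 2))) 1 := by
  rw [Fin.sum_univ_eq_sum_range (fun i => (X : PowerSeries R) ^ (i * (2 * j + 2))),
    Finset.sum_range_succ']
  have h1 : MEq a (∑ x ∈ Finset.range M,
      (X : PowerSeries R) ^ ((x + 1) * (2 * j + 2))) 0 := by
    refine MEq_sum_zero _ _ fun x _ => MEq_X_pow ?_
    have : 1 * (2 * j + 2) ≤ (x + 1) * (2 * j + 2) := Nat.mul_le_mul (by omega) le_rfl
    omega
  have h2 : MEq a ((X : PowerSeries R) ^ (0 * (2 * j + 2))) 1 := by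
    rw [Nat.zero_mul, pow_zero]; exact MEq.refl _
  have := h1.add h2
  rwa [zero_add] at this

lemma Dser_stab {a M : ℕ} (h : a ≤ M) :
    MEq a (Dser M : PowerSeries R) (Dser a) := by
  rw [Dser, Dser,
    show Finset.range (M + 1) = Finset.range ((a + 1) + (M - a)) from by congr 1; omega,
    Finset.prod_range_add]
  have h1 : MEq a (∏ x ∈ Finset.range (M - a),
      ∑ i : Fin (M + 1), (X : PowerSeries R) ^ ((i : ℕ) * (2 * ((a + 1) + x) + 2))) 1 :=
    MEq_prod_one _ _ fun x _ => Ssum_one _ (by omega)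
  have h2 : MEq a (∏ j ∈ Finset.range (a + 1),
        ∑ i : Fin (M + 1), (X : PowerSeries R) ^ ((i : ℕ) * (2 * j + 2)))
      (∏ j ∈ Finset.range (a + 1),
        ∑ i : Fin (a + 1), (X : PowerSeries R) ^ ((i : ℕ) * (2 * j + 2))) :=
    MEq.prod _ _ _ fun j _ => Ssum_stab j h
  have := h2.mul h1
  rwa [mul_one] at this

lemma Eser_stab {a M : ℕ} (h : a ≤ M) :
    MEq a (Eser M : PowerSeries R) (Eser a) := by
  rw [Eser, Eser,
    show Finset.range (M + 1) = Finset.range ((a + 1) + (M - a)) from by congr 1; omega,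
    Finset.prod_range_add]
  have h1 : MEq a (∏ x ∈ Finset.range (M - a),
      (1 - (X : PowerSeries R) ^ (2 * (((a + 1) + x) + 1)))) 1 :=
    MEq_prod_one _ _ fun x _ => MEq_one_sub (by omega)
  have := (MEq.refl (a := a)
      (∏ j ∈ Finset.range (a + 1), (1 - (X : PowerSeries R) ^ (2 * (j + 1))))).mul h1
  rwa [mul_one] at this

lemma DE (M : ℕ) :
    (Dser M : PowerSeries R) * Eser M =
      ∏ j ∈ Finset.range (M + 1), (1 - (X : PowerSeries R) ^ ((M + 1) * (2 * (j + 1)))) := by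
  rw [Dser, Eser, ← Finset.prod_mul_distrib]
  refine Finset.prod_congr rfl fun j _ => ?_
  have hx : ∀ i : ℕ, (X : PowerSeries R) ^ (i * (2 * j + 2)) =
      ((X : PowerSeries R) ^ (2 * (j + 1))) ^ i := by
    intro i
    rw [← pow_mul]
    congr 1
    ring
  rw [Fin.sum_univ_eq_sum_range (fun i => (X : PowerSeries R) ^ (i * (2 * j + 2)))]
  simp only [hx]
  have hg := geom_sum_mul ((X : PowerSeries R) ^ (2 * (j + 1))) (M + 1)
  have hpow : ((X : PowerSeries R) ^ (2 * (j + 1))) ^ (M + 1) =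
      (X : PowerSeries R) ^ ((M + 1) * (2 * (j + 1))) := by
    rw [← pow_mul]
    congr 1
    ring
  linear_combination -hg - hpow

lemma oddExp (M : ℕ) (r : R) :
    ∏ j ∈ Finset.range (M + 1), (1 + PowerSeries.C r * PowerSeries.X ^ (2 * j + 1)) =
    ∑ t : Finset (Fin (M + 1)),
      PowerSeries.C (r ^ t.card) * PowerSeries.X ^ (∑ j ∈ t, (2 * (j : ℕ) + 1)) := by
  rw [← Fin.prod_univ_eq_prod_range
    (fun j => (1 + PowerSeries.C r * PowerSeries.X ^ (2 * j + 1)))]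
  have hcomm : ∀ j : Fin (M + 1),
      (1 + PowerSeries.C r * PowerSeries.X ^ (2 * (j : ℕ) + 1)) =
      (PowerSeries.C r * PowerSeries.X ^ (2 * (j : ℕ) + 1) + 1) := fun j => add_comm _ _
  rw [Finset.prod_congr rfl fun j _ => hcomm j, Finset.prod_add, Finset.powerset_univ]
  refine Finset.sum_congr rfl fun t _ => ?_
  rw [Finset.prod_const_one, mul_one, Finset.prod_mul_distrib, Finset.prod_const,
    Finset.prod_pow_eq_pow_sum, ← map_pow]

lemma evenExp (M : ℕ) :
    (Dser M : PowerSeries R) =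
    ∑ m : Fin (M + 1) → Fin (M + 1),
      PowerSeries.X ^ (∑ j : Fin (M + 1), (m j : ℕ) * (2 * (j : ℕ) + 2)) := by
  rw [Dser, ← Fin.prod_univ_eq_prod_range
    (fun j => ∑ i : Fin (M + 1), (X : PowerSeries R) ^ ((i : ℕ) * (2 * j + 2)))]
  rw [Finset.prod_univ_sum, Fintype.piFinset_univ]
  exact Finset.sum_congr rfl fun m _ => Finset.prod_pow_eq_pow_sum _ _ _

lemma unit_zpow_eq (u : Rˣ) (α β : ℕ) :
    ((u ^ ((α : ℤ) - (β : ℤ)) : Rˣ) : R) = ((u : Rˣ) : R) ^ α * (((u⁻¹ : Rˣ) : R)) ^ β := by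
  rw [zpow_sub, zpow_natCast, zpow_natCast]
  rw [show ((u ^ α) * (u ^ β)⁻¹ : Rˣ) = u ^ α * (u⁻¹) ^ β by rw [inv_pow],
    Units.val_mul, Units.val_pow_eq_pow_val, Units.val_pow_eq_pow_val]

lemma master (n : ℕ) (c : Fin n → Rˣ) (M a : ℕ) :
    PowerSeries.coeff a ((Aser n c M : PowerSeries R) * Dser M) =
      ∑ x ∈ Finset.univ.filter
          (fun x : (Fin n → Finset (Fin (M + 1))) × (Fin n → Finset (Fin (M + 1))) ×
              (Fin (M + 1) → Fin (M + 1)) =>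
            ((∑ k : Fin n, ∑ j ∈ x.1 k, (2 * (j : ℕ) + 1)) +
                (∑ k : Fin n, ∑ j ∈ x.2.1 k, (2 * (j : ℕ) + 1)) +
                ∑ j : Fin (M + 1), (x.2.2 j : ℕ) * (2 * (j : ℕ) + 2)) = a),
        ∏ k : Fin n, ((c k ^ (((x.1 k).card : ℤ) - ((x.2.1 k).card : ℤ)) : Rˣ) : R) := by
  classical
  have hA : (Aser n c M : PowerSeries R) =
      (∑ f : Fin n → Finset (Fin (M + 1)),
        PowerSeries.C (∏ k : Fin n, ((c k : Rˣ) : R) ^ (f k).card) *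
          PowerSeries.X ^ (∑ k : Fin n, ∑ j ∈ f k, (2 * (j : ℕ) + 1))) *
      (∑ g : Fin n → Finset (Fin (M + 1)),
        PowerSeries.C (∏ k : Fin n, (((c k)⁻¹ : Rˣ) : R) ^ (g k).card) *
          PowerSeries.X ^ (∑ k : Fin n, ∑ j ∈ g k, (2 * (j : ℕ) + 1))) := by
    rw [Aser]
    have hsplit : ∀ k : Fin n,
        ∏ j ∈ Finset.range (M + 1),
          ((1 + PowerSeries.C ((c k : Rˣ) : R) * PowerSeries.X ^ (2 * j + 1)) *
            (1 + PowerSeries.C (((c k)⁻¹ : Rˣ) : R) * PowerSeries.X ^ (2 * j + 1))) =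
        (∏ j ∈ Finset.range (M + 1),
          (1 + PowerSeries.C ((c k : Rˣ) : R) * PowerSeries.X ^ (2 * j + 1))) *
        (∏ j ∈ Finset.range (M + 1),
          (1 + PowerSeries.C (((c k)⁻¹ : Rˣ) : R) * PowerSeries.X ^ (2 * j + 1))) :=
      fun k => Finset.prod_mul_distrib
    rw [Finset.prod_congr rfl fun k _ => hsplit k, Finset.prod_mul_distrib]
    congr 1
    · simp only [oddExp]
      rw [Finset.prod_univ_sum, Fintype.piFinset_univ]
      refine Finset.sum_congr rfl fun f _ => ?_
      rw [Finset.prod_mul_distrib, ← map_prod, Finset.prod_pow_eq_pow_sum]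
    · simp only [oddExp]
      rw [Finset.prod_univ_sum, Fintype.piFinset_univ]
      refine Finset.sum_congr rfl fun g _ => ?_
      rw [Finset.prod_mul_distrib, ← map_prod, Finset.prod_pow_eq_pow_sum]
  have hprod : (Aser n c M : PowerSeries R) * Dser M =
      ∑ f : Fin n → Finset (Fin (M + 1)), ∑ g : Fin n → Finset (Fin (M + 1)),
        ∑ m : Fin (M + 1) → Fin (M + 1),
        PowerSeries.C (∏ k : Fin n, ((c k : Rˣ) : R) ^ (f k).card) *
            PowerSeries.X ^ (∑ k : Fin n, ∑ j ∈ f k, (2 * (j : ℕ) + 1)) *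
          (PowerSeries.C (∏ k : Fin n, (((c k)⁻¹ : Rˣ) : R) ^ (g k).card) *
            PowerSeries.X ^ (∑ k : Fin n, ∑ j ∈ g k, (2 * (j : ℕ) + 1))) *
          PowerSeries.X ^ (∑ j : Fin (M + 1), (m j : ℕ) * (2 * (j : ℕ) + 2)) := by
    rw [hA, evenExp, Finset.sum_mul_sum, Finset.sum_mul]
    refine Finset.sum_congr rfl fun f _ => ?_
    rw [Finset.sum_mul]
    refine Finset.sum_congr rfl fun g _ => ?_
    rw [Finset.mul_sum]
  rw [hprod]
  simp only [map_sum]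
  rw [Finset.sum_filter, Fintype.sum_prod_type]
  refine Finset.sum_congr rfl fun f _ => ?_
  rw [Fintype.sum_prod_type]
  refine Finset.sum_congr rfl fun g _ => ?_
  refine Finset.sum_congr rfl fun m _ => ?_
  rw [show (PowerSeries.C (∏ k : Fin n, ((c k : Rˣ) : R) ^ (f k).card) *
        PowerSeries.X ^ (∑ k : Fin n, ∑ j ∈ f k, (2 * (j : ℕ) + 1)) *
        (PowerSeries.C (∏ k : Fin n, (((c k)⁻¹ : Rˣ) : R) ^ (g k).card) *
          PowerSeries.X ^ (∑ k : Fin n, ∑ j ∈ g k, (2 * (j : ℕ) + 1))) *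
        PowerSeries.X ^ (∑ j : Fin (M + 1), (m j : ℕ) * (2 * (j : ℕ) + 2))) =
      PowerSeries.C ((∏ k : Fin n, ((c k : Rˣ) : R) ^ (f k).card) *
          ∏ k : Fin n, (((c k)⁻¹ : Rˣ) : R) ^ (g k).card) *
        PowerSeries.X ^ ((∑ k : Fin n, ∑ j ∈ f k, (2 * (j : ℕ) + 1)) +
          (∑ k : Fin n, ∑ j ∈ g k, (2 * (j : ℕ) + 1)) +
          ∑ j : Fin (M + 1), (m j : ℕ) * (2 * (j : ℕ) + 2)) from by
    rw [map_mul, pow_add, pow_add]; ring]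
  rw [coeff_C_mul, coeff_X_pow]
  have hcol : (∏ k : Fin n, ((c k : Rˣ) : R) ^ (f k).card) *
      (∏ k : Fin n, (((c k)⁻¹ : Rˣ) : R) ^ (g k).card) =
      ∏ k : Fin n, ((c k ^ (((f k).card : ℤ) - ((g k).card : ℤ)) : Rˣ) : R) := by
    rw [← Finset.prod_mul_distrib]
    exact Finset.prod_congr rfl fun k _ => (unit_zpow_eq (c k) _ _).symm
  by_cases hw : (∑ k : Fin n, ∑ j ∈ f k, (2 * (j : ℕ) + 1)) +
      (∑ k : Fin n, ∑ j ∈ g k, (2 * (j : ℕ) + 1)) +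
      (∑ j : Fin (M + 1), (m j : ℕ) * (2 * (j : ℕ) + 2)) = a
  · rw [if_pos hw.symm, if_pos hw, mul_one, hcol]
  · rw [if_neg (fun h => hw h.symm), if_neg hw, mul_zero]

end Stmt11Aux

open Stmt11Aux in
/-- Generating function for the grounded partitions coming from the level-1 module of
`A_{2n}^{(2)}`: partitions whose odd parts `2j+1` appear at most once with each of the
`2n` colours `c₁,c₁⁻¹,…,c_n,c_n⁻¹` and whose positive even parts (colour `c₀ = 1`) may
repeat arbitrarily.  Such a partition of `N` is encoded by the sets `x.1 k` (resp.
`x.2.1 k`) of `j`'s with part `2j+1` coloured `c_k` (resp. `c_k⁻¹`) and the multiplicity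
function `x.2.2` of the even parts `2(j+1)`; its colour is `∏ c_k^(|x.1 k| - |x.2.1 k|)`.
Then `∑_π C(π)q^{|π|} = ∏_{k=1}^n (-c_k q;q²)_∞(-c_k⁻¹q;q²)_∞ / (q²;q²)_∞`, i.e.
`G * E = P` where `E = (q²;q²)_∞` and `P` is the double product, both characterized
coefficientwise by truncation. -/
theorem stmt11 {R : Type*} [CommRing R] (n : ℕ) (hn : 0 < n) (c : Fin n → Rˣ)
    (G E P : PowerSeries R)
    (hG : ∀ N : ℕ, PowerSeries.coeff N G =
      ∑ x ∈ Finset.univ.filter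
          (fun x : (Fin n → Finset (Fin (N + 1))) × (Fin n → Finset (Fin (N + 1))) ×
              (Fin (N + 1) → Fin (N + 1)) =>
            ((∑ k : Fin n, ∑ j ∈ x.1 k, (2 * (j : ℕ) + 1)) +
                (∑ k : Fin n, ∑ j ∈ x.2.1 k, (2 * (j : ℕ) + 1)) +
                ∑ j : Fin (N + 1), (x.2.2 j : ℕ) * (2 * (j : ℕ) + 2)) = N),
        ∏ k : Fin n, ((c k ^ (((x.1 k).card : ℤ) - ((x.2.1 k).card : ℤ)) : Rˣ) : R))
    (hE : ∀ N : ℕ, PowerSeries.coeff N E =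
      PowerSeries.coeff N (∏ j ∈ Finset.range (N + 1),
        (1 - PowerSeries.X ^ (2 * (j + 1)) : PowerSeries R)))
    (hP : ∀ N : ℕ, PowerSeries.coeff N P =
      PowerSeries.coeff N (∏ k : Fin n, ∏ j ∈ Finset.range (N + 1),
        ((1 + PowerSeries.C ((c k : Rˣ) : R) * PowerSeries.X ^ (2 * j + 1)) *
          (1 + PowerSeries.C (((c k)⁻¹ : Rˣ) : R) * PowerSeries.X ^ (2 * j + 1))))) :
    G * E = P := by
  refine PowerSeries.ext fun N => ?_
  have key : ∀ p ∈ Finset.HasAntidiagonal.antidiagonal N,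
      PowerSeries.coeff p.1 G * PowerSeries.coeff p.2 E =
      PowerSeries.coeff p.1 ((Aser n c N : PowerSeries R) * Dser N) *
        PowerSeries.coeff p.2 (Eser N : PowerSeries R) := by
    intro p hp
    rw [Finset.HasAntidiagonal.mem_antidiagonal] at hp
    have h1 : p.1 ≤ N := by omega
    have h2 : p.2 ≤ N := by omega
    have eG : PowerSeries.coeff p.1 G =
        PowerSeries.coeff p.1 ((Aser n c N : PowerSeries R) * Dser N) := by
      rw [(hG p.1).trans (master n c p.1 p.1).symm]
      exact (((Aser_stab n c h1).mul (Dser_stab h1)) p.1 le_rfl).symm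
    have eE : PowerSeries.coeff p.2 E =
        PowerSeries.coeff p.2 (Eser N : PowerSeries R) := by
      rw [hE p.2]
      exact (Eser_stab h2 p.2 le_rfl).symm
    rw [eG, eE]
  calc PowerSeries.coeff N (G * E)
      = ∑ p ∈ Finset.HasAntidiagonal.antidiagonal N,
          PowerSeries.coeff p.1 G * PowerSeries.coeff p.2 E := PowerSeries.coeff_mul _ _ _
    _ = ∑ p ∈ Finset.HasAntidiagonal.antidiagonal N,
          PowerSeries.coeff p.1 ((Aser n c N : PowerSeries R) * Dser N) *
            PowerSeries.coeff p.2 (Eser N : PowerSeries R) := Finset.sum_congr rfl key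
    _ = PowerSeries.coeff N ((Aser n c N : PowerSeries R) * Dser N * Eser N) :=
        (PowerSeries.coeff_mul _ _ _).symm
    _ = PowerSeries.coeff N ((Aser n c N : PowerSeries R) *
          ∏ j ∈ Finset.range (N + 1),
            (1 - (PowerSeries.X : PowerSeries R) ^ ((N + 1) * (2 * (j + 1))))) := by
        rw [mul_assoc, DE N]
    _ = PowerSeries.coeff N ((Aser n c N : PowerSeries R) * 1) := by
        refine ((MEq.refl (a := N) (Aser n c N)).mul
          (MEq_prod_one _ _ fun j _ => MEq_one_sub ?_)) N le_rfl
        have : (N + 1) * 2 ≤ (N + 1) * (2 * (j + 1)) := Nat.mul_le_mul_left _ (by omega)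
        omega
    _ = PowerSeries.coeff N P := by
        rw [mul_one, hP N]
        rfl
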